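/- There exist a constant c > 0 and an integer n_0 such that for all n ≥ n_0, E[Λ(n)] ≥ c · n^{1−β}. -/

import Mathlib

open MeasureTheory ProbabilityTheory Filter
open scoped ENNReal

noncomputable section

/-- The representative in `{1,…,N}` of `s + i*p` modulo `N`. -/
def idx (N s p i : ℕ) : ℕ := (s + i * p - 1) % N + 1

/-- `M_N = ⌈(2+β) log₂ N⌉`. -/
def MN (β : ℝ) (N : ℕ) : ℕ := Nat.ceil ((2 + β) * Real.logb 2 N)

/-- The event `{ξ_s = 0 and ξ_{s+ip (mod N)} = 1 for all 1 ≤ i ≤ M_N}`,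
whose indicator is `I(s,p,N)`. -/
def Ev {Ω : Type*} (ξ : ℕ → Ω → Bool) (β : ℝ) (s p N : ℕ) : Set Ω :=
  {ω | ξ s ω = false ∧ ∀ i, 1 ≤ i → i ≤ MN β N → ξ (idx N s p i) ω = true}

open scoped Classical in
/-- `L_n = {(s,p,N) : n ≤ N ≤ 2n, 1 ≤ s ≤ N, N/6 ≤ p ≤ N/5}`. -/
def L (n : ℕ) : Finset (ℕ × ℕ × ℕ) :=
  ((Finset.Icc 1 (2 * n)) ×ˢ (Finset.Icc 1 (2 * n)) ×ˢ (Finset.Icc n (2 * n))).filter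
    fun spN => spN.1 ≤ spN.2.2 ∧
      (spN.2.2 : ℝ) / 6 ≤ (spN.2.1 : ℝ) ∧ (spN.2.1 : ℝ) ≤ (spN.2.2 : ℝ) / 5

lemma idx_ne {N s p i : ℕ} (hs : 1 ≤ s) (hsN : s ≤ N) (h : ¬ N ∣ i * p) :
    idx N s p i ≠ s := by
  intro he
  apply h
  have hN : 0 < N := le_trans hs hsN
  unfold idx at he
  have h1 : s + i * p - 1 = (s - 1) + i * p := by omega
  rw [h1] at he
  have h2 : (s - 1 + i * p) % N = s - 1 := by omega
  have h3 : (s - 1) % N = s - 1 := Nat.mod_eq_of_lt (by omega)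
  have : (s - 1 + i * p) % N = (s - 1 + 0) % N := by
    rw [h2, Nat.add_zero, h3]
  have := (Nat.ModEq.add_left_cancel' (s-1) this.symm).symm
  simpa [Nat.modEq_zero_iff_dvd] using this

lemma meas_Ev_lb {Ω : Type*} [MeasurableSpace Ω] (μ : Measure Ω) [IsProbabilityMeasure μ]
    (ξ : ℕ → Ω → Bool)
    (hindep : iIndepFun ξ μ)
    (hone : ∀ i, μ {ω | ξ i ω = true} = 1/2)
    (hzero : ∀ i, μ {ω | ξ i ω = false} = 1/2)
    (β : ℝ) {s p N : ℕ} (hs : 1 ≤ s) (hsN : s ≤ N)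
    (hgood : ∀ i, 1 ≤ i → i ≤ MN β N → ¬ N ∣ i * p) :
    ((1:ℝ≥0∞)/2) ^ (MN β N + 1) ≤ μ (Ev ξ β s p N) := by
  classical
  set M := MN β N with hM
  set T : Finset ℕ := insert s ((Finset.Icc 1 M).image (idx N s p)) with hT
  set b : ℕ → Bool := fun j => if j = s then false else true with hb
  set A : ℕ → Set Ω := fun j => ξ j ⁻¹' {b j} with hA
  have hmeasb : ∀ j ∈ T, MeasurableSet[(inferInstance : MeasurableSpace Bool).comap (ξ j)] (A j) :=
    fun j _ => ⟨{b j}, trivial, rfl⟩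
  have hprod : μ (⋂ j ∈ T, A j) = ∏ j ∈ T, μ (A j) := hindep.meas_biInter hmeasb
  have hAval : ∀ j, μ (A j) = 1/2 := by
    intro j
    by_cases hj : j = s
    · have : A j = {ω | ξ j ω = false} := by
        ext ω; simp [hA, hb, hj]
      rw [this, hzero]
    · have : A j = {ω | ξ j ω = true} := by
        ext ω; simp [hA, hb, hj]
      rw [this, hone]
  have hsub : (⋂ j ∈ T, A j) ⊆ Ev ξ β s p N := by
    intro ω hω
    simp only [Set.mem_iInter] at hω
    constructor
    · have := hω s (by simp [hT])
      simpa [hA, hb] using this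
    · intro i h1 h2
      have hmem : idx N s p i ∈ T := by
        simp only [hT, Finset.mem_insert, Finset.mem_image]
        right; exact ⟨i, Finset.mem_Icc.mpr ⟨h1, h2⟩, rfl⟩
      have := hω _ hmem
      have hne := idx_ne hs hsN (hgood i h1 h2)
      simpa [hA, hb, hne] using this
  calc ((1:ℝ≥0∞)/2) ^ (M + 1) ≤ ((1:ℝ≥0∞)/2) ^ T.card := by
        apply pow_le_pow_of_le_one zero_le (by norm_num)
        calc T.card ≤ ((Finset.Icc 1 M).image (idx N s p)).card + 1 := Finset.card_insert_le _ _
          _ ≤ (Finset.Icc 1 M).card + 1 := by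
              exact Nat.add_le_add_right (Finset.card_image_le) 1
          _ = M + 1 := by rw [Nat.card_Icc]; omega
    _ = ∏ j ∈ T, μ (A j) := by rw [Finset.prod_congr rfl (fun j _ => hAval j), Finset.prod_const]
    _ = μ (⋂ j ∈ T, A j) := hprod.symm
    _ ≤ μ (Ev ξ β s p N) := measure_mono hsub

open scoped Classical in
lemma good_p_card (β : ℝ) (n N : ℕ) (h60 : 60 ≤ N) (hN2n : N ≤ 2*n) (M' : ℕ)
    (hM : MN β N ≤ M') :
    ((N:ℝ)/30 - 1) - (M':ℝ)^2 ≤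
      (((Finset.Icc 1 (2*n)).filter (fun p : ℕ => ((N:ℝ)/6 ≤ (p:ℝ) ∧ (p:ℝ) ≤ (N:ℝ)/5) ∧
        ∀ i, 1 ≤ i → i ≤ MN β N → ¬ N ∣ i*p)).card : ℝ) := by
  classical
  set A : Finset ℕ := (Finset.Icc 1 (2*n)).filter (fun p : ℕ => ((N:ℝ)/6 ≤ (p:ℝ) ∧ (p:ℝ) ≤ (N:ℝ)/5)) with hA
  set good : ℕ → Prop := fun p => ∀ i, 1 ≤ i → i ≤ MN β N → ¬ N ∣ i*p with hgood
  have hsplit : (Finset.Icc 1 (2*n)).filter (fun p : ℕ => ((N:ℝ)/6 ≤ (p:ℝ) ∧ (p:ℝ) ≤ (N:ℝ)/5) ∧ good p)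
      = A.filter good := by
    rw [hA, Finset.filter_filter]
  rw [hsplit]
  have hNpos : (0:ℝ) < N := by positivity
  have hsubA : Finset.Icc (Nat.ceil ((N:ℝ)/6)) (N/5) ⊆ A := by
    intro p hp
    rw [Finset.mem_Icc] at hp
    obtain ⟨hp1, hp2⟩ := hp
    have hc : (N:ℝ)/6 ≤ p := Nat.ceil_le.mp hp1
    have hp5 : p * 5 ≤ N := (Nat.le_div_iff_mul_le (by norm_num)).mp hp2
    have h60r : (60:ℝ) ≤ N := by exact_mod_cast h60
    have hge1 : 1 ≤ p := by
      have : (1:ℝ) ≤ (p:ℝ) := by linarith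
      exact_mod_cast this
    refine Finset.mem_filter.mpr ⟨Finset.mem_Icc.mpr ⟨hge1, ?_⟩, hc, ?_⟩
    · omega
    · have : (p:ℝ) * 5 ≤ N := by exact_mod_cast hp5
      linarith
  have hcardIcc : ((N:ℝ)/30 - 1) ≤ ((Finset.Icc (Nat.ceil ((N:ℝ)/6)) (N/5)).card : ℝ) := by
    have hceil : (Nat.ceil ((N:ℝ)/6) : ℝ) < (N:ℝ)/6 + 1 :=
      Nat.ceil_lt_add_one (by positivity)
    have hflr : (N:ℝ)/5 - 1 < ((N/5 : ℕ) : ℝ) := by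
      have hm : N % 5 < 5 := Nat.mod_lt _ (by norm_num)
      have : (N:ℝ) < 5 * ((N/5 : ℕ):ℝ) + 5 := by
        have : N < 5 * (N/5) + 5 := by omega
        exact_mod_cast this
      linarith
    have hle : Nat.ceil ((N:ℝ)/6) ≤ N/5 := by
      have h1 : ((N:ℝ)/6 + 1) ≤ (N:ℝ)/5 - 1 := by
        have : (60:ℝ) ≤ N := by exact_mod_cast h60
        linarith
      have : (Nat.ceil ((N:ℝ)/6) : ℝ) < ((N/5 : ℕ):ℝ) := by linarith
      exact_mod_cast this.le
    rw [Nat.card_Icc, Nat.cast_sub (by omega)]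
    push_cast
    linarith
  have hcardA : ((N:ℝ)/30 - 1) ≤ (A.card : ℝ) := by
    calc ((N:ℝ)/30 - 1) ≤ ((Finset.Icc (Nat.ceil ((N:ℝ)/6)) (N/5)).card : ℝ) := hcardIcc
      _ ≤ (A.card : ℝ) := by exact_mod_cast Finset.card_le_card hsubA
  have hbad : (A.filter (fun p => ¬ good p)).card ≤ M' ^ 2 := by
    have hsub : A.filter (fun p => ¬ good p) ⊆
        (Finset.Icc 1 M' ×ˢ Finset.Icc 1 M').image (fun ki => ki.1 * N / ki.2) := by
      intro p hp
      rw [Finset.mem_filter] at hp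
      obtain ⟨hpA, hbadp⟩ := hp
      have hbadp' : ¬ ∀ i, 1 ≤ i → i ≤ MN β N → ¬ N ∣ i*p := hbadp
      push_neg at hbadp'
      obtain ⟨i, hi1, hiM, hdvd⟩ := hbadp'
      rw [hA, Finset.mem_filter, Finset.mem_Icc] at hpA
      obtain ⟨⟨hp1, _⟩, _, hp5r⟩ := hpA
      have hp5 : p * 5 ≤ N := by
        have : (p:ℝ) * 5 ≤ N := by linarith
        exact_mod_cast this
      obtain ⟨k, hk⟩ := hdvd
      have hNpos' : 0 < N := by omega
      have hk1 : 1 ≤ k := by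
        rcases Nat.eq_zero_or_pos k with h | h
        · exfalso; rw [h, Nat.mul_zero] at hk
          have : 0 < i * p := Nat.mul_pos hi1 hp1
          omega
        · exact h
      have hkM : k ≤ M' := by
        have h1 : N * k = i * p := hk.symm
        have h2 : i * p ≤ M' * N := by
          calc i * p ≤ M' * p := Nat.mul_le_mul_right _ (le_trans hiM hM)
            _ ≤ M' * N := Nat.mul_le_mul_left _ (by omega)
        nlinarith [h1, h2, hNpos']
      refine Finset.mem_image.mpr ⟨(k, i), ?_, ?_⟩
      · rw [Finset.mem_product, Finset.mem_Icc, Finset.mem_Icc]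
        exact ⟨⟨hk1, hkM⟩, hi1, le_trans hiM hM⟩
      · show k * N / i = p
        exact Nat.div_eq_of_eq_mul_left hi1 (by rw [Nat.mul_comm k N, ← hk, Nat.mul_comm])
    calc (A.filter (fun p => ¬ good p)).card
        ≤ ((Finset.Icc 1 M' ×ˢ Finset.Icc 1 M').image (fun ki => ki.1 * N / ki.2)).card :=
          Finset.card_le_card hsub
      _ ≤ (Finset.Icc 1 M' ×ˢ Finset.Icc 1 M').card := Finset.card_image_le
      _ = M' ^ 2 := by
          rw [Finset.card_product, Nat.card_Icc]
          have h : M' + 1 - 1 = M' := by omega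
          rw [h, sq]
  have hpart : (A.filter good).card + (A.filter (fun p => ¬ good p)).card = A.card :=
    Finset.card_filter_add_card_filter_not _
  have : (A.card : ℝ) - (M':ℝ)^2 ≤ ((A.filter good).card : ℝ) := by
    have h1 : ((A.filter (fun p => ¬ good p)).card : ℝ) ≤ (M':ℝ)^2 := by exact_mod_cast hbad
    have h2 : ((A.filter good).card : ℝ) + ((A.filter (fun p => ¬ good p)).card : ℝ) = A.card := by
      exact_mod_cast hpart
    linarith
  linarith

lemma MN_mono (β : ℝ) (hβ : 0 < β) {N K : ℕ} (hN : 1 ≤ N) (hNK : N ≤ K) :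
    MN β N ≤ MN β K := by
  apply Nat.ceil_le_ceil
  apply mul_le_mul_of_nonneg_left _ (by linarith)
  exact Real.logb_le_logb_of_le (by norm_num) (by exact_mod_cast hN) (by exact_mod_cast hNK)

lemma MN_le (β : ℝ) (hβ : 0 < β) {N : ℕ} (hN : 1 ≤ N) :
    (MN β N : ℝ) ≤ (2 + β) * Real.logb 2 N + 1 := by
  have h0 : 0 ≤ (2 + β) * Real.logb 2 N := by
    apply mul_nonneg (by linarith)
    exact Real.logb_nonneg (by norm_num) (by exact_mod_cast hN)
  exact le_of_lt (Nat.ceil_lt_add_one h0)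

theorem expectation_Lambda_lower_bound
    {Ω : Type*} [MeasurableSpace Ω] (μ : Measure Ω) [IsProbabilityMeasure μ]
    (ξ : ℕ → Ω → Bool) (hmeas : ∀ i, Measurable (ξ i))
    (hindep : iIndepFun ξ μ)
    (hone : ∀ i, μ {ω | ξ i ω = true} = 1/2)
    (hzero : ∀ i, μ {ω | ξ i ω = false} = 1/2)
    (β : ℝ) (hβ : 0 < β) (hβ1 : β < 1) :
    ∃ c : ℝ, 0 < c ∧ ∃ n₀ : ℕ, ∀ n : ℕ, n₀ ≤ n →
      c * (n : ℝ) ^ ((1 : ℝ) - β) ≤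
        ∑ a ∈ L n, (μ (Ev ξ β a.1 a.2.1 a.2.2)).toReal := by
  classical
  refine ⟨1/1920, by norm_num, ?_⟩
  -- the eventual smallness condition
  have hev : ∀ᶠ n : ℕ in atTop, ((MN β (2*n) : ℝ))^2 + 1 ≤ (n:ℝ)/60 := by
    have hlog : Tendsto (fun x : ℝ => Real.log x ^ 2 / (1 * x + 0)) atTop (nhds 0) :=
      Real.tendsto_pow_log_div_mul_add_atTop 1 0 2 one_ne_zero
    have h2n : Tendsto (fun n : ℕ => (2*(n:ℝ))) atTop atTop :=
      (tendsto_natCast_atTop_atTop (R := ℝ)).const_mul_atTop (by norm_num)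
    have hcomp : Tendsto (fun n : ℕ => Real.log (2*(n:ℝ)) ^ 2 / (2*(n:ℝ))) atTop (nhds 0) := by
      have := hlog.comp h2n
      simpa [Function.comp_def] using this
    have hsmall : ∀ᶠ n : ℕ in atTop, Real.log (2*(n:ℝ)) ^ 2 / (2*(n:ℝ)) < 1/(49*240) :=
      hcomp.eventually_lt_const (by norm_num)
    filter_upwards [hsmall, eventually_ge_atTop 240] with n hn h240
    have hnR : (240:ℝ) ≤ n := by exact_mod_cast h240
    have h2npos : (0:ℝ) < 2*(n:ℝ) := by linarith
    have hlog1 : 1 ≤ Real.log (2*(n:ℝ)) := by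
      rw [← Real.log_exp 1]
      apply Real.log_le_log (Real.exp_pos 1)
      have := Real.exp_one_lt_d9
      linarith
    have hMle : (MN β (2*n) : ℝ) ≤ 6 * Real.log (2*(n:ℝ)) + 1 := by
      have h1 : (MN β (2*n) : ℝ) ≤ (2 + β) * Real.logb 2 (2*n : ℕ) + 1 :=
        MN_le β hβ (by omega)
      have hcast : ((2*n : ℕ):ℝ) = 2*(n:ℝ) := by push_cast; ring
      rw [hcast] at h1
      have hlogb : Real.logb 2 (2*(n:ℝ)) = Real.log (2*(n:ℝ)) / Real.log 2 := rfl
      have hlog2 : (1:ℝ)/2 ≤ Real.log 2 := by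
        have := Real.log_two_gt_d9
        linarith
      have hlogbpos : 0 ≤ Real.log (2*(n:ℝ)) := by linarith
      have h2 : Real.logb 2 (2*(n:ℝ)) ≤ 2 * Real.log (2*(n:ℝ)) := by
        rw [hlogb]
        rw [div_le_iff₀ (by linarith : (0:ℝ) < Real.log 2)]
        nlinarith
      calc (MN β (2*n) : ℝ) ≤ (2 + β) * Real.logb 2 (2*(n:ℝ)) + 1 := h1
        _ ≤ 3 * Real.logb 2 (2*(n:ℝ)) + 1 := by
            have hlogbnn : 0 ≤ Real.logb 2 (2*(n:ℝ)) := by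
              rw [hlogb]; positivity
            nlinarith
        _ ≤ 6 * Real.log (2*(n:ℝ)) + 1 := by linarith
    have hkey : Real.log (2*(n:ℝ))^2 ≤ (2*(n:ℝ))/(49*240) := by
      rw [div_lt_iff₀ h2npos] at hn
      linarith
    have hsq : ((MN β (2*n) : ℝ))^2 ≤ 49 * Real.log (2*(n:ℝ))^2 := by
      have hnn : (0:ℝ) ≤ (MN β (2*n) : ℝ) := Nat.cast_nonneg _
      nlinarith
    nlinarith
  rw [Filter.eventually_atTop] at hev
  obtain ⟨n₁, hn₁⟩ := hev
  refine ⟨max n₁ 240, ?_⟩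
  intro n hn
  have hn240 : 240 ≤ n := le_trans (le_max_right _ _) hn
  have hE1 : ((MN β (2*n) : ℝ))^2 + 1 ≤ (n:ℝ)/60 := hn₁ n (le_trans (le_max_left _ _) hn)
  set M' := MN β (2*n) with hM'
  set q : ℝ := ((1:ℝ)/2) ^ (M' + 1) with hq
  have hqpos : 0 < q := by positivity
  -- good p set
  set GP : ℕ → Finset ℕ := fun N => (Finset.Icc 1 (2*n)).filter
    (fun p : ℕ => ((N:ℝ)/6 ≤ (p:ℝ) ∧ (p:ℝ) ≤ (N:ℝ)/5) ∧
      ∀ i, 1 ≤ i → i ≤ MN β N → ¬ N ∣ i*p) with hGP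
  set S : Finset (ℕ×ℕ×ℕ) :=
    Finset.Icc 1 n ×ˢ (Finset.Icc n (2*n)).biUnion (fun N => (GP N).image (fun p => (p, N)))
    with hS
  have hSL : S ⊆ L n := by
    intro a ha
    rw [hS, Finset.mem_product] at ha
    obtain ⟨ha1, ha2⟩ := ha
    rw [Finset.mem_biUnion] at ha2
    obtain ⟨N, hN, hmem⟩ := ha2
    rw [Finset.mem_image] at hmem
    obtain ⟨p, hp, hpe⟩ := hmem
    rw [Finset.mem_Icc] at hN ha1
    rw [hGP, Finset.mem_filter, Finset.mem_Icc] at hp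
    obtain ⟨⟨hp1, hp2⟩, ⟨hple, hpge⟩, _⟩ := hp
    unfold L
    rw [Finset.mem_filter, Finset.mem_product, Finset.mem_product]
    have h2 : a.2 = (p, N) := hpe ▸ rfl
    have hp' : a.2.1 = p := by rw [h2]
    have hN' : a.2.2 = N := by rw [h2]
    refine ⟨⟨Finset.mem_Icc.mpr ⟨ha1.1, by omega⟩, ?_, ?_⟩, ?_, ?_, ?_⟩
    · rw [hp']; exact Finset.mem_Icc.mpr ⟨hp1, hp2⟩
    · rw [hN']; exact Finset.mem_Icc.mpr hN
    · rw [hN']; omega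
    · rw [hp', hN']; exact hple
    · rw [hp', hN']; exact hpge
  -- nonnegativity
  have hnn : ∀ a ∈ L n, 0 ≤ (μ (Ev ξ β a.1 a.2.1 a.2.2)).toReal :=
    fun a _ => ENNReal.toReal_nonneg
  have hsub_sum : ∑ a ∈ S, (μ (Ev ξ β a.1 a.2.1 a.2.2)).toReal ≤
      ∑ a ∈ L n, (μ (Ev ξ β a.1 a.2.1 a.2.2)).toReal :=
    Finset.sum_le_sum_of_subset_of_nonneg hSL (fun a ha _ => ENNReal.toReal_nonneg)
  -- per-term lower bound
  have hterm : ∀ s ∈ Finset.Icc 1 n, ∀ N ∈ Finset.Icc n (2*n), ∀ p ∈ GP N,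
      q ≤ (μ (Ev ξ β s p N)).toReal := by
    intro s hs N hN p hp
    rw [Finset.mem_Icc] at hs hN
    rw [hGP, Finset.mem_filter] at hp
    obtain ⟨_, _, hgood⟩ := hp
    have hlb := meas_Ev_lb μ ξ hindep hone hzero β hs.1 (le_trans hs.2 hN.1) hgood
    have hMN : MN β N ≤ M' := MN_mono β hβ (by omega) (by omega)
    have h2 : ((1:ℝ≥0∞)/2) ^ (M' + 1) ≤ ((1:ℝ≥0∞)/2) ^ (MN β N + 1) :=
      pow_le_pow_of_le_one zero_le (by norm_num) (by omega)
    have h3 : ((1:ℝ≥0∞)/2) ^ (M' + 1) ≤ μ (Ev ξ β s p N) := le_trans h2 hlb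
    have h4 : (((1:ℝ≥0∞)/2) ^ (M' + 1)).toReal ≤ (μ (Ev ξ β s p N)).toReal :=
      ENNReal.toReal_mono (measure_ne_top μ _) h3
    calc q = (((1:ℝ≥0∞)/2) ^ (M' + 1)).toReal := by
          rw [ENNReal.toReal_pow, ENNReal.toReal_div]
          norm_num
          exact hq
      _ ≤ _ := h4
  -- cardinality of GP
  have hGPcard : ∀ N ∈ Finset.Icc n (2*n), ((n:ℝ)/60) ≤ ((GP N).card : ℝ) := by
    intro N hN
    rw [Finset.mem_Icc] at hN
    have h1 := good_p_card β n N (by omega) hN.2 M' (MN_mono β hβ (by omega) (by omega))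
    have hnN : (n:ℝ) ≤ N := by exact_mod_cast hN.1
    calc ((n:ℝ)/60) ≤ ((N:ℝ)/30 - 1) - (M':ℝ)^2 := by linarith
      _ ≤ _ := h1
  -- the sum over S
  have hsum : (n:ℝ) * ((n:ℝ) * (((n:ℝ)/60) * q)) ≤
      ∑ a ∈ S, (μ (Ev ξ β a.1 a.2.1 a.2.2)).toReal := by
    rw [hS, Finset.sum_product]
    have hinner : ∀ s ∈ Finset.Icc 1 n,
        (n:ℝ) * (((n:ℝ)/60) * q) ≤
        ∑ y ∈ (Finset.Icc n (2*n)).biUnion (fun N => (GP N).image (fun p => (p, N))),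
          (μ (Ev ξ β (s, y).1 (s, y).2.1 (s, y).2.2)).toReal := by
      intro s hs
      rw [Finset.sum_biUnion]
      · have hN_bound : ∀ N ∈ Finset.Icc n (2*n),
            ((n:ℝ)/60) * q ≤ ∑ y ∈ (GP N).image (fun p => (p, N)),
              (μ (Ev ξ β (s, y).1 (s, y).2.1 (s, y).2.2)).toReal := by
          intro N hN
          rw [Finset.sum_image (by intro x _ y _ h; exact (Prod.mk.injEq _ _ _ _).mp h |>.1)]
          have h1 : ∀ p ∈ GP N, q ≤ (μ (Ev ξ β s p N)).toReal := hterm s hs N hN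
          calc ((n:ℝ)/60) * q ≤ ((GP N).card : ℝ) * q :=
                mul_le_mul_of_nonneg_right (hGPcard N hN) hqpos.le
            _ ≤ ∑ p ∈ GP N, (μ (Ev ξ β s p N)).toReal := by
                have := Finset.card_nsmul_le_sum (GP N)
                  (fun p => (μ (Ev ξ β s p N)).toReal) q h1
                simpa [nsmul_eq_mul] using this
        have hib : (0:ℝ) ≤ ((n:ℝ)/60) * q := by positivity
        calc (n:ℝ) * (((n:ℝ)/60) * q)
            ≤ ((Finset.Icc n (2*n)).card : ℝ) * (((n:ℝ)/60) * q) := by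
              apply mul_le_mul_of_nonneg_right _ hib
              rw [Nat.card_Icc]
              have : 2*n + 1 - n = n + 1 := by omega
              rw [this]
              exact_mod_cast Nat.le_succ n
          _ ≤ ∑ N ∈ Finset.Icc n (2*n), ∑ y ∈ (GP N).image (fun p => (p, N)),
                (μ (Ev ξ β (s, y).1 (s, y).2.1 (s, y).2.2)).toReal := by
              have := Finset.card_nsmul_le_sum (Finset.Icc n (2*n))
                (fun N => ∑ y ∈ (GP N).image (fun p => (p, N)),
                  (μ (Ev ξ β (s, y).1 (s, y).2.1 (s, y).2.2)).toReal)
                (((n:ℝ)/60) * q) hN_bound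
              simpa [nsmul_eq_mul] using this
      · -- pairwise disjointness
        intro x hx y hy hxy
        simp only [Finset.disjoint_left]
        intro a hax hay
        rw [Finset.mem_image] at hax hay
        obtain ⟨px, _, hpx⟩ := hax
        obtain ⟨py, _, hpy⟩ := hay
        apply hxy
        rw [← hpx] at hpy
        exact (((Prod.mk.injEq _ _ _ _).mp hpy).2).symm
    have hib2 : (0:ℝ) ≤ (n:ℝ) * (((n:ℝ)/60) * q) := by positivity
    calc (n:ℝ) * ((n:ℝ) * (((n:ℝ)/60) * q))
        ≤ ((Finset.Icc 1 n).card : ℝ) * ((n:ℝ) * (((n:ℝ)/60) * q)) := by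
          apply mul_le_mul_of_nonneg_right _ hib2
          rw [Nat.card_Icc]
          have : n + 1 - 1 = n := by omega
          rw [this]
      _ ≤ ∑ s ∈ Finset.Icc 1 n,
            ∑ y ∈ (Finset.Icc n (2*n)).biUnion (fun N => (GP N).image (fun p => (p, N))),
              (μ (Ev ξ β (s, y).1 (s, y).2.1 (s, y).2.2)).toReal := by
          have := Finset.card_nsmul_le_sum (Finset.Icc 1 n)
            (fun s => ∑ y ∈ (Finset.Icc n (2*n)).biUnion (fun N => (GP N).image (fun p => (p, N))),
              (μ (Ev ξ β (s, y).1 (s, y).2.1 (s, y).2.2)).toReal)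
            ((n:ℝ) * (((n:ℝ)/60) * q)) hinner
          simpa [nsmul_eq_mul] using this
  -- final numeric estimate
  have hnpos : (0:ℝ) < n := by exact_mod_cast (by omega : 0 < n)
  have hP : (0:ℝ) < (n:ℝ)^((2:ℝ)+β) := Real.rpow_pos_of_pos hnpos _
  have hq_lb : ((32:ℝ) * (n:ℝ)^((2:ℝ)+β))⁻¹ ≤ q := by
    have hcast2n : ((2*n:ℕ):ℝ) = 2*(n:ℝ) := by push_cast; ring
    set Lg : ℝ := Real.logb 2 (2*(n:ℝ)) with hLg
    have hE : (M':ℝ) ≤ (2+β) * Lg + 1 := by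
      have := MN_le β hβ (show 1 ≤ 2*n by omega)
      rw [hcast2n] at this
      exact this
    have h2n0 : (0:ℝ) < 2*(n:ℝ) := by linarith
    have h2M : (2:ℝ)^(M'+1 : ℕ) ≤ 32 * (n:ℝ)^((2:ℝ)+β) := by
      have h1 : (2:ℝ)^(M'+1 : ℕ) = (2:ℝ)^(((M'+1:ℕ)):ℝ) := (Real.rpow_natCast _ _).symm
      rw [h1]
      have h2 : (((M'+1:ℕ)):ℝ) ≤ (2+β)*Lg + 2 := by push_cast; linarith
      calc (2:ℝ)^(((M'+1:ℕ)):ℝ) ≤ (2:ℝ)^((2+β)*Lg + 2) :=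
            Real.rpow_le_rpow_of_exponent_le one_le_two h2
        _ = (2:ℝ)^(Lg*(2+β)) * (2:ℝ)^((2:ℝ)) := by
            rw [Real.rpow_add two_pos, mul_comm (2+β) Lg]
        _ = ((2:ℝ)^Lg)^((2:ℝ)+β) * (2:ℝ)^((2:ℝ)) := by
            rw [Real.rpow_mul (by norm_num : (0:ℝ) ≤ 2)]
        _ = (2*(n:ℝ))^((2:ℝ)+β) * (2:ℝ)^((2:ℝ)) := by
            rw [hLg, Real.rpow_logb two_pos (by norm_num) h2n0]
        _ = (2:ℝ)^((2:ℝ)+β) * (n:ℝ)^((2:ℝ)+β) * (2:ℝ)^((2:ℝ)) := by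
            rw [Real.mul_rpow (by norm_num) hnpos.le]
        _ ≤ 8 * (n:ℝ)^((2:ℝ)+β) * 4 := by
            have h8 : (2:ℝ)^((2:ℝ)+β) ≤ 8 := by
              calc (2:ℝ)^((2:ℝ)+β) ≤ (2:ℝ)^((3:ℝ)) :=
                    Real.rpow_le_rpow_of_exponent_le one_le_two (by linarith)
                _ = 8 := by
                    rw [show (3:ℝ) = ((3:ℕ):ℝ) by norm_num, Real.rpow_natCast]; norm_num
            have h4 : (2:ℝ)^((2:ℝ)) = 4 := by
              rw [show (2:ℝ) = ((2:ℕ):ℝ) by norm_num, Real.rpow_natCast]; norm_num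
            rw [h4]
            nlinarith [hP]
        _ = 32 * (n:ℝ)^((2:ℝ)+β) := by ring
    have hq_eq : q = ((2:ℝ)^(M'+1 : ℕ))⁻¹ := by
      rw [hq, one_div, inv_pow]
    rw [hq_eq]
    apply inv_anti₀ (by positivity) h2M
  have hid : (n:ℝ)^((1:ℝ)-β) = ((n:ℝ)^(3:ℕ)) / (n:ℝ)^((2:ℝ)+β) := by
    rw [← Real.rpow_natCast (n:ℝ) 3, ← Real.rpow_sub hnpos]
    congr 1
    push_cast
    ring
  calc (1/1920 : ℝ) * (n:ℝ)^((1:ℝ)-β)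
      = (n:ℝ)^(3:ℕ) * ((32 * (n:ℝ)^((2:ℝ)+β))⁻¹) / 60 := by
        rw [hid]; field_simp; ring
    _ ≤ (n:ℝ)^(3:ℕ) * q / 60 := by
        apply div_le_div_of_nonneg_right _ (by norm_num)
        exact mul_le_mul_of_nonneg_left hq_lb (by positivity)
    _ = (n:ℝ) * ((n:ℝ) * (((n:ℝ)/60) * q)) := by ring
    _ ≤ ∑ a ∈ S, (μ (Ev ξ β a.1 a.2.1 a.2.2)).toReal := hsum
    _ ≤ ∑ a ∈ L n, (μ (Ev ξ β a.1 a.2.1 a.2.2)).toReal := hsub_sum
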